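/- Let L : ℝ[x₁,…,x_d] → ℝ be linear and nonnegative on squares, and suppose L(qf) = ∫_K f dν for a finite positive measure ν on compact K. Then ∫_{𝒱(q) ∩ K} f dν = 0 for every polynomial f; in particular ν restricted to 𝒱(q) ∩ K is the zero measure. -/

import Mathlib

open MeasureTheory MvPolynomial Filter Topology

/-- Cauchy–Schwarz for a linear functional nonnegative on squares. -/
lemma cs_aux {d : ℕ} (L : MvPolynomial (Fin d) ℝ →ₗ[ℝ] ℝ)
    (hL : ∀ p : MvPolynomial (Fin d) ℝ, 0 ≤ L (p ^ 2))
    (a b : MvPolynomial (Fin d) ℝ) :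
    (L (a * b)) ^ 2 ≤ L (a ^ 2) * L (b ^ 2) := by
  have key : ∀ t : ℝ, 0 ≤ L (a ^ 2) * (t * t) + (2 * L (a * b)) * t + L (b ^ 2) := by
    intro t
    have h1 : (t • a + b) ^ 2 = (t * t) • a ^ 2 + (2 * t) • (a * b) + b ^ 2 := by
      simp only [smul_eq_C_mul, map_mul, map_ofNat]
      ring
    have h2 := hL (t • a + b)
    rw [h1] at h2
    simp only [map_add, LinearMap.map_smul, smul_eq_mul] at h2
    linarith [h2]
  have hd := discrim_le_zero key
  rw [discrim] at hd
  nlinarith [hd]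

theorem nu_vanishes_on_zero_set (d : ℕ)
    (L : MvPolynomial (Fin d) ℝ →ₗ[ℝ] ℝ)
    (hL : ∀ p : MvPolynomial (Fin d) ℝ, 0 ≤ L (p ^ 2))
    (q : MvPolynomial (Fin d) ℝ)
    (K : Set (Fin d → ℝ)) (hK : IsCompact K)
    (ν : Measure (Fin d → ℝ)) [IsFiniteMeasure ν]
    (hrep : ∀ f : MvPolynomial (Fin d) ℝ,
      L (q * f) = ∫ x in K, eval x f ∂ν) :
    (∀ f : MvPolynomial (Fin d) ℝ,
      (∫ x in {x | eval x q = 0} ∩ K, eval x f ∂ν) = 0) ∧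
    ν.restrict ({x | eval x q = 0} ∩ K) = 0 := by
  classical
  have hqc : Continuous fun x : Fin d → ℝ => eval x q := MvPolynomial.continuous_eval q
  have hKm : MeasurableSet K := hK.isClosed.measurableSet
  have hSm : MeasurableSet {x : Fin d → ℝ | eval x q = 0} :=
    (isClosed_eq hqc continuous_const).measurableSet
  have hAm : MeasurableSet ({x : Fin d → ℝ | eval x q = 0} ∩ K) := hSm.inter hKm
  -- bound on q² over K
  obtain ⟨M0, hM0⟩ := hK.exists_bound_of_continuousOn ((hqc.pow 2).continuousOn)
  set M : ℝ := max M0 1 with hM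
  have hM1 : (1 : ℝ) ≤ M := le_max_right _ _
  have hMpos : (0 : ℝ) < M := lt_of_lt_of_le one_pos hM1
  have hqM : ∀ x ∈ K, (eval x q) ^ 2 ≤ M := by
    intro x hx
    have := hM0 x hx
    calc (eval x q) ^ 2 ≤ ‖(eval x q) ^ 2‖ := le_abs_self _
      _ ≤ M0 := this
      _ ≤ M := le_max_left _ _
  -- the polynomials pₙ
  set p : ℕ → MvPolynomial (Fin d) ℝ := fun n => (1 - (M⁻¹ : ℝ) • q ^ 2) ^ n with hp
  have hpe : ∀ (n : ℕ) (x : Fin d → ℝ),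
      eval x (p n) = (1 - M⁻¹ * (eval x q) ^ 2) ^ n := by
    intro n x
    simp [hp, smul_eq_C_mul]
  set r : (Fin d → ℝ) → ℝ := fun x => 1 - M⁻¹ * (eval x q) ^ 2 with hr
  have hr01 : ∀ x ∈ K, 0 ≤ r x ∧ r x ≤ 1 := by
    intro x hx
    constructor
    · have h := hqM x hx
      have : M⁻¹ * (eval x q) ^ 2 ≤ 1 := by
        rw [← inv_mul_cancel₀ (ne_of_gt hMpos)]
        exact mul_le_mul_of_nonneg_left h (inv_nonneg.mpr hMpos.le)
      simp only [hr]; linarith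
    · have : 0 ≤ M⁻¹ * (eval x q) ^ 2 :=
        mul_nonneg (inv_nonneg.mpr hMpos.le) (sq_nonneg _)
      simp only [hr]; linarith
  -- the key inequality for each n
  have key : ∀ n : ℕ,
      (∫ x in K, eval x (p n) ∂ν) ^ 2
        ≤ L 1 * ∫ x in K, eval x q * (eval x (p n)) ^ 2 ∂ν := by
    intro n
    have h1 : L (q * p n) = ∫ x in K, eval x (p n) ∂ν := hrep _
    have h2 : L (q * (q * (p n) ^ 2)) = ∫ x in K, eval x (q * (p n) ^ 2) ∂ν := hrep _
    have h3 : (∫ x in K, eval x (p n) ∂ν) ^ 2 = (L (1 * (q * p n))) ^ 2 := by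
      rw [one_mul, h1]
    rw [h3]
    have h4 := cs_aux L hL 1 (q * p n)
    have h5 : L ((q * p n) ^ 2) = ∫ x in K, eval x q * (eval x (p n)) ^ 2 ∂ν := by
      have : (q * p n) ^ 2 = q * (q * (p n) ^ 2) := by ring
      rw [this, h2]
      refine integral_congr_ae (Filter.Eventually.of_forall fun x => ?_)
      simp [mul_pow]
    rw [one_pow] at h4
    rw [h5] at h4
    exact h4
  -- dominated convergence for ∫ pₙ
  have hFmeas : ∀ n, AEStronglyMeasurable (fun x => eval x (p n)) (ν.restrict K) :=
    fun n => (MvPolynomial.continuous_eval (p n)).aestronglyMeasurable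
  have haeK : ∀ᵐ x ∂ν.restrict K, x ∈ K := ae_restrict_mem hKm
  have hI : Tendsto (fun n => ∫ x in K, eval x (p n) ∂ν) atTop
      (𝓝 (∫ x in K, ({x : Fin d → ℝ | eval x q = 0}).indicator 1 x ∂ν)) := by
    refine tendsto_integral_of_dominated_convergence (fun _ => (1 : ℝ))
      hFmeas (integrable_const 1) ?_ ?_
    · intro n
      filter_upwards [haeK] with x hx
      obtain ⟨h0, h1⟩ := hr01 x hx
      rw [hpe n x]
      rw [Real.norm_eq_abs, abs_pow, abs_of_nonneg h0]
      exact pow_le_one₀ h0 h1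
    · filter_upwards [haeK] with x hx
      obtain ⟨h0, h1⟩ := hr01 x hx
      by_cases hq0 : eval x q = 0
      · have : ∀ n, eval x (p n) = 1 := by
          intro n; rw [hpe n x, hq0]; simp
        simp only [this]
        have : ({x : Fin d → ℝ | eval x q = 0}).indicator (1 : (Fin d → ℝ) → ℝ) x = 1 :=
          Set.indicator_of_mem (show x ∈ {x : Fin d → ℝ | eval x q = 0} from hq0) _
        rw [this]
        exact tendsto_const_nhds
      · have hrlt : r x < 1 := by
          have : 0 < M⁻¹ * (eval x q) ^ 2 :=
            mul_pos (inv_pos.mpr hMpos) (by positivity)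
          simp only [hr]; linarith
        have : ({x : Fin d → ℝ | eval x q = 0}).indicator (1 : (Fin d → ℝ) → ℝ) x = 0 :=
          Set.indicator_of_notMem (show x ∉ {x : Fin d → ℝ | eval x q = 0} from hq0) _
        rw [this]
        have htend := tendsto_pow_atTop_nhds_zero_of_lt_one h0 hrlt
        refine htend.congr fun n => ?_
        rw [hpe n x]
  -- dominated convergence for ∫ q pₙ²
  have hJ : Tendsto (fun n => ∫ x in K, eval x q * (eval x (p n)) ^ 2 ∂ν) atTop (𝓝 0) := by
    have h0int : (0 : ℝ) = ∫ x in K, (0 : ℝ) ∂ν := by simp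
    rw [h0int]
    refine tendsto_integral_of_dominated_convergence (fun _ => M)
      (fun n => (hqc.mul ((MvPolynomial.continuous_eval (p n)).pow 2)).aestronglyMeasurable)
      (integrable_const M) ?_ ?_
    · intro n
      filter_upwards [haeK] with x hx
      obtain ⟨h0, h1⟩ := hr01 x hx
      have habs : |eval x q| ≤ M := by
        have hsq := hqM x hx
        nlinarith [sq_abs (eval x q), abs_nonneg (eval x q)]
      rw [Real.norm_eq_abs, abs_mul]
      have : |(eval x (p n)) ^ 2| ≤ 1 := by
        rw [hpe n x, abs_pow, abs_pow, abs_of_nonneg h0]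
        exact pow_le_one₀ (pow_nonneg h0 n) (pow_le_one₀ h0 h1)
      calc |eval x q| * |(eval x (p n)) ^ 2| ≤ M * 1 :=
            mul_le_mul habs this (abs_nonneg _) (le_trans (abs_nonneg _) habs)
        _ = M := mul_one M
    · filter_upwards [haeK] with x hx
      obtain ⟨h0, h1⟩ := hr01 x hx
      by_cases hq0 : eval x q = 0
      · have : ∀ n, eval x q * (eval x (p n)) ^ 2 = 0 := by
          intro n; rw [hq0, zero_mul]
        simp only [this]
        exact tendsto_const_nhds
      · have hrlt : r x < 1 := by
          have : 0 < M⁻¹ * (eval x q) ^ 2 :=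
            mul_pos (inv_pos.mpr hMpos) (by positivity)
          simp only [hr]; linarith
        have htend : Tendsto (fun n => (r x ^ 2) ^ n) atTop (𝓝 0) :=
          tendsto_pow_atTop_nhds_zero_of_lt_one (sq_nonneg _)
            (by nlinarith)
        have := htend.const_mul (eval x q)
        rw [mul_zero] at this
        refine this.congr fun n => ?_
        rw [hpe n x, ← pow_mul, ← pow_mul, Nat.mul_comm 2 n]
    ---
  -- pass to the limit
  have hindic : (∫ x in K, ({x : Fin d → ℝ | eval x q = 0}).indicator 1 x ∂ν)
      = (ν ({x : Fin d → ℝ | eval x q = 0} ∩ K)).toReal := by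
    rw [integral_indicator_one hSm, measureReal_def, Measure.restrict_apply hSm]
  have hlim : ((ν ({x : Fin d → ℝ | eval x q = 0} ∩ K)).toReal) ^ 2 ≤ L 1 * 0 := by
    rw [hindic] at hI
    exact le_of_tendsto_of_tendsto' (hI.pow 2) (hJ.const_mul (L 1)) key
  have htr0 : (ν ({x : Fin d → ℝ | eval x q = 0} ∩ K)).toReal = 0 := by
    nlinarith [sq_nonneg ((ν ({x : Fin d → ℝ | eval x q = 0} ∩ K)).toReal)]
  have hν0 : ν ({x : Fin d → ℝ | eval x q = 0} ∩ K) = 0 := by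
    have := (ENNReal.toReal_eq_zero_iff _).mp htr0
    rcases this with h | h
    · exact h
    · exact absurd h (measure_ne_top ν _)
  have hres : ν.restrict ({x : Fin d → ℝ | eval x q = 0} ∩ K) = 0 :=
    Measure.restrict_eq_zero.mpr hν0
  refine ⟨fun f => ?_, hres⟩
  rw [hres]
  exact integral_zero_measure _
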